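/- Let ρ_C, ρ_L, α, I_0 be non-negative reals and τ_C, τ_B, τ_I positive, and suppose ρ_C I_0 − 1/τ_C > 0. Let C, L, B : ℝ → ℝ be differentiable and satisfy, for all t ≥ 0, C'(t) = C(t)(ρ_C(L(t)+B(t)+I_0) − 1/τ_C), L'(t) = ρ_L L(t) − α C(t) L(t), B'(t) = I_0/τ_I − B(t)(α C(t) + 1/τ_B), with C(0) > 0, L(0) ≥ 0, B(0) ≥ 0. Then, setting k = ρ_C I_0 − 1/τ_C > 0, one has C(t) ≥ C(0) e^{k t} for all t ≥ 0; in particular C(t) → ∞ as t → ∞, so the solution is unbounded. -/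

import Mathlib

open Filter Topology

private lemma primDeriv (f : ℝ → ℝ) (hf : Continuous f) (t : ℝ) :
    HasDerivAt (fun u => ∫ s in (0:ℝ)..u, f s) (f t) t :=
  intervalIntegral.integral_hasDerivAt_right (hf.intervalIntegrable _ _)
    (hf.stronglyMeasurableAtFilter _ _) hf.continuousAt

private lemma mono_aux (G : ℝ → ℝ) (hG : Differentiable ℝ G)
    (h : ∀ t : ℝ, 0 < t → 0 ≤ deriv G t) : ∀ t : ℝ, 0 ≤ t → G 0 ≤ G t := by
  have hm : MonotoneOn G (Set.Ici (0:ℝ)) :=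
    monotoneOn_of_deriv_nonneg (convex_Ici 0) hG.continuous.continuousOn
      (fun x _ => (hG x).differentiableWithinAt)
      (fun x hx => h x (by simpa [interior_Ici] using hx))
  exact fun t ht => hm Set.self_mem_Ici ht ht

private lemma const_aux (G : ℝ → ℝ) (hG : Differentiable ℝ G)
    (h : ∀ t : ℝ, 0 < t → deriv G t = 0) : ∀ t : ℝ, 0 ≤ t → G t = G 0 := by
  have h1 := mono_aux G hG (fun t ht => (h t ht).ge)
  have h2 := mono_aux (fun u => -G u) hG.neg (fun t ht => by
    rw [deriv.fun_neg, h t ht, neg_zero])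
  intro t ht
  have := h2 t ht
  simp only [neg_le_neg_iff] at this
  exact le_antisymm this (h1 t ht)

theorem CART_unbounded_in_R4
    (ρC ρL α I₀ τC τB τI : ℝ)
    (hρC : 0 ≤ ρC) (hρL : 0 ≤ ρL) (hα : 0 ≤ α) (hI₀ : 0 ≤ I₀)
    (hτC : 0 < τC) (hτB : 0 < τB) (hτI : 0 < τI)
    (hk : 0 < ρC * I₀ - 1 / τC)
    (C L B : ℝ → ℝ)
    (hC : Differentiable ℝ C) (hL : Differentiable ℝ L) (hB : Differentiable ℝ B)
    (hCode : ∀ t : ℝ, 0 ≤ t →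
      deriv C t = C t * (ρC * (L t + B t + I₀) - 1 / τC))
    (hLode : ∀ t : ℝ, 0 ≤ t →
      deriv L t = ρL * L t - α * C t * L t)
    (hBode : ∀ t : ℝ, 0 ≤ t →
      deriv B t = I₀ / τI - B t * (α * C t + 1 / τB))
    (hC0 : 0 < C 0) (hL0 : 0 ≤ L 0) (hB0 : 0 ≤ B 0) :
    (∀ t : ℝ, 0 ≤ t → C 0 * Real.exp ((ρC * I₀ - 1 / τC) * t) ≤ C t) ∧
      Tendsto C atTop atTop := by
  have hCc : Continuous C := hC.continuous
  have hLc : Continuous L := hL.continuous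
  have hBc : Continuous B := hB.continuous
  -- L is nonnegative on [0,∞)
  set f₁ : ℝ → ℝ := fun s => ρL - α * C s with hf₁def
  have hf₁c : Continuous f₁ := continuous_const.sub (continuous_const.mul hCc)
  set F₁ : ℝ → ℝ := fun u => ∫ s in (0:ℝ)..u, f₁ s with hF₁def
  have hF₁d : ∀ t : ℝ, HasDerivAt F₁ (f₁ t) t := primDeriv f₁ hf₁c
  have hF₁diff : Differentiable ℝ F₁ := fun t => (hF₁d t).differentiableAt
  have hF₁0 : F₁ 0 = 0 := intervalIntegral.integral_same
  have hLnn : ∀ t : ℝ, 0 ≤ t → 0 ≤ L t := by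
    have hconst := const_aux (fun u => L u * Real.exp (-(F₁ u)))
      (hL.mul (hF₁diff.neg.exp)) ?_
    · intro t ht
      have heq := hconst t ht
      simp only [hF₁0, neg_zero, Real.exp_zero, mul_one] at heq
      have hpos := Real.exp_pos (-(F₁ t))
      nlinarith [heq, hL0, hpos]
    · intro t ht
      have hd : HasDerivAt (fun u => L u * Real.exp (-(F₁ u)))
          (deriv L t * Real.exp (-(F₁ t)) + L t * (Real.exp (-(F₁ t)) * -(f₁ t))) t :=
        (hL t).hasDerivAt.mul ((hF₁d t).neg.exp)
      rw [hd.deriv, hLode t ht.le]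
      simp only [hf₁def]; ring
  -- B is nonnegative on [0,∞)
  set f₂ : ℝ → ℝ := fun s => α * C s + 1 / τB with hf₂def
  have hf₂c : Continuous f₂ := (continuous_const.mul hCc).add continuous_const
  set F₂ : ℝ → ℝ := fun u => ∫ s in (0:ℝ)..u, f₂ s with hF₂def
  have hF₂d : ∀ t : ℝ, HasDerivAt F₂ (f₂ t) t := primDeriv f₂ hf₂c
  have hF₂diff : Differentiable ℝ F₂ := fun t => (hF₂d t).differentiableAt
  have hF₂0 : F₂ 0 = 0 := intervalIntegral.integral_same
  have hBnn : ∀ t : ℝ, 0 ≤ t → 0 ≤ B t := by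
    have hmono := mono_aux (fun u => B u * Real.exp (F₂ u))
      (hB.mul (hF₂diff.exp)) ?_
    · intro t ht
      have hle := hmono t ht
      simp only [hF₂0, Real.exp_zero, mul_one] at hle
      have hpos := Real.exp_pos (F₂ t)
      nlinarith [hle, hB0, hpos]
    · intro t ht
      have hd : HasDerivAt (fun u => B u * Real.exp (F₂ u))
          (deriv B t * Real.exp (F₂ t) + B t * (Real.exp (F₂ t) * f₂ t)) t :=
        (hB t).hasDerivAt.mul ((hF₂d t).exp)
      rw [hd.deriv, hBode t ht.le]
      have : I₀ / τI ≥ 0 := div_nonneg hI₀ hτI.le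
      have hpos := (Real.exp_pos (F₂ t)).le
      simp only [hf₂def]
      nlinarith
  -- Explicit formula for C
  set f₃ : ℝ → ℝ := fun s => ρC * (L s + B s + I₀) - 1 / τC with hf₃def
  have hf₃c : Continuous f₃ :=
    (continuous_const.mul ((hLc.add hBc).add continuous_const)).sub continuous_const
  set F₃ : ℝ → ℝ := fun u => ∫ s in (0:ℝ)..u, f₃ s with hF₃def
  have hF₃d : ∀ t : ℝ, HasDerivAt F₃ (f₃ t) t := primDeriv f₃ hf₃c
  have hF₃diff : Differentiable ℝ F₃ := fun t => (hF₃d t).differentiableAt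
  have hF₃0 : F₃ 0 = 0 := intervalIntegral.integral_same
  have hCform : ∀ t : ℝ, 0 ≤ t → C t = C 0 * Real.exp (F₃ t) := by
    have hconst := const_aux (fun u => C u * Real.exp (-(F₃ u)))
      (hC.mul (hF₃diff.neg.exp)) ?_
    · intro t ht
      have heq := hconst t ht
      simp only [hF₃0, neg_zero, Real.exp_zero, mul_one] at heq
      have : C t * Real.exp (-(F₃ t)) * Real.exp (F₃ t) = C 0 * Real.exp (F₃ t) := by
        rw [heq]
      rwa [mul_assoc, ← Real.exp_add, neg_add_cancel, Real.exp_zero, mul_one] at this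
    · intro t ht
      have hd : HasDerivAt (fun u => C u * Real.exp (-(F₃ u)))
          (deriv C t * Real.exp (-(F₃ t)) + C t * (Real.exp (-(F₃ t)) * -(f₃ t))) t :=
        (hC t).hasDerivAt.mul ((hF₃d t).neg.exp)
      rw [hd.deriv, hCode t ht.le]
      simp only [hf₃def]; ring
  -- lower bound on F₃
  have hF₃ge : ∀ t : ℝ, 0 ≤ t → (ρC * I₀ - 1 / τC) * t ≤ F₃ t := by
    intro t ht
    have hmono : ∀ s ∈ Set.Icc (0:ℝ) t, (ρC * I₀ - 1 / τC) ≤ f₃ s := by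
      intro s hs
      have hLs := hLnn s hs.1
      have hBs := hBnn s hs.1
      simp only [hf₃def]
      nlinarith
    have := intervalIntegral.integral_mono_on ht
      (intervalIntegrable_const (c := ρC * I₀ - 1 / τC) (μ := MeasureTheory.volume)) (hf₃c.intervalIntegrable 0 t) hmono
    rw [intervalIntegral.integral_const] at this
    simp only [smul_eq_mul, sub_zero] at this
    rw [hF₃def]
    simp only []
    linarith [this]
  have hmain : ∀ t : ℝ, 0 ≤ t → C 0 * Real.exp ((ρC * I₀ - 1 / τC) * t) ≤ C t := by
    intro t ht
    rw [hCform t ht]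
    exact mul_le_mul_of_nonneg_left (Real.exp_le_exp.mpr (hF₃ge t ht)) hC0.le
  refine ⟨hmain, ?_⟩
  have hlb : Tendsto (fun t => C 0 * Real.exp ((ρC * I₀ - 1 / τC) * t)) atTop atTop := by
    apply Tendsto.const_mul_atTop hC0
    exact Real.tendsto_exp_atTop.comp (tendsto_id.const_mul_atTop hk)
  exact tendsto_atTop_mono' atTop
    (eventually_atTop.mpr ⟨0, fun t ht => hmain t ht⟩) hlb
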